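/- Let E be finite with two linear orders ⊴ and ⊴', and let M, M' be the same underlying matroid ordered by ⊴ and ⊴' respectively. If Act(M) = Act(M') (active elements with respect to the full ground set E) and the two orders agree on this set, then Ext_M(B) = Ext_{M'}(B) for every base B, and consequently the identity map on bases is an isomorphism of the external lattices L(M) ≅ L(M'). -/

import Mathlib

open Matroid Set

variable {α : Type*}

/-- A circuit: a minimal dependent subset of the ground set. -/
def mCircuit (M : Matroid α) (C : Set α) : Prop :=
  C ⊆ M.E ∧ ¬ M.Indep C ∧ ∀ D ⊂ C, M.Indep D

/-- Active elements with respect to F, for an explicit linear order l. -/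
def mActO (l : LinearOrder α) (M : Matroid α) (F : Set α) : Set α :=
  {e | ∃ C, mCircuit M C ∧ C ⊆ F ∪ {e} ∧ e ∈ C ∧ ∀ x ∈ C, l.le e x}

/-- Externally active elements with respect to F, for the order l. -/
def mExtO (l : LinearOrder α) (M : Matroid α) (F : Set α) : Set α :=
  mActO l M F \ F

/-- Las Vergnas' external order on bases, for the order l. -/
def extLEO (l : LinearOrder α) (M : Matroid α) (A B : Set α) : Prop :=
  A ⊆ B ∪ mExtO l M B

lemma exists_lo_min (l : LinearOrder α) {s : Set α} (hs : s.Finite) (hne : s.Nonempty) :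
    ∃ a ∈ s, ∀ b ∈ s, l.le a b := by
  letI := l
  exact Set.exists_min_image s id hs hne

lemma mActO_mono (l l' : LinearOrder α) (M : Matroid α) [M.Finite]
    (hAct : mActO l M M.E = mActO l' M M.E)
    (hord : ∀ a ∈ mActO l M M.E, ∀ b ∈ mActO l M M.E, (l.le a b → l'.le a b))
    (F : Set α) : mActO l M F ⊆ mActO l' M F := by
  rintro e ⟨C, hC, hCF, heC, hmin⟩
  have hCE : C ⊆ M.E := hC.1
  have hCfin : C.Finite := M.ground_finite.subset hCE
  obtain ⟨f, hfC, hfmin⟩ := exists_lo_min l' hCfin ⟨e, heC⟩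
  have he_act : e ∈ mActO l M M.E :=
    ⟨C, hC, fun x hx => Or.inl (hCE hx), heC, hmin⟩
  have hf_act' : f ∈ mActO l' M M.E :=
    ⟨C, hC, fun x hx => Or.inl (hCE hx), hfC, hfmin⟩
  have hf_act : f ∈ mActO l M M.E := hAct ▸ hf_act'
  have hef : e = f := l'.le_antisymm _ _ (hord e he_act f hf_act (hmin f hfC)) (hfmin e heC)
  exact ⟨C, hC, hCF, heC, hef ▸ hfmin⟩

theorem extLattice_independent_of_order (l l' : LinearOrder α)
    (M : Matroid α) [M.Finite]
    (hAct : mActO l M M.E = mActO l' M M.E)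
    (hord : ∀ a ∈ mActO l M M.E, ∀ b ∈ mActO l M M.E, (l.le a b ↔ l'.le a b)) :
    (∀ B, M.IsBase B → mExtO l M B = mExtO l' M B) ∧
    (∀ A B, M.IsBase A → M.IsBase B → (extLEO l M A B ↔ extLEO l' M A B)) := by
  have hActF : ∀ F : Set α, mActO l M F = mActO l' M F := by
    intro F
    apply Set.Subset.antisymm
    · exact mActO_mono l l' M hAct (fun a ha b hb => (hord a ha b hb).1) F
    · refine mActO_mono l' l M hAct.symm ?_ F
      intro a ha b hb
      rw [← hAct] at ha hb
      exact (hord a ha b hb).2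
  have hExt : ∀ F : Set α, mExtO l M F = mExtO l' M F := by
    intro F; unfold mExtO; rw [hActF F]
  exact ⟨fun B _ => hExt B, fun A B _ _ => by unfold extLEO; rw [hExt B]⟩
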